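/- Let (X,d,μ) be an unbounded metric measure space with 0 < μ(B) < ∞ for all balls, and fix a ∈ X. Define the measure μ_a on X by dμ_a(x) = dμ(x)/μ(B(a, 1+d(x,a)))^2. Then μ_a(X) ≤ 2/μ(B(a,1)); in particular μ_a is a finite measure. -/

import Mathlib

open MeasureTheory Metric Set ENNReal

private lemma key_ineq {p q : ℝ≥0∞} (hp : p ≠ 0) (hq : q ≠ ⊤) (hpq : p ≤ q) :
    (q ^ 2)⁻¹ * (q - p) ≤ p⁻¹ - q⁻¹ := by
  have hp' : p ≠ ⊤ := ne_top_of_le_ne_top hq hpq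
  lift q to NNReal using hq
  lift p to NNReal using hp'
  have hp0 : p ≠ 0 := by simpa using hp
  have hq0 : q ≠ 0 := by
    intro h; subst h
    exact hp0 (le_antisymm (by exact_mod_cast hpq) zero_le)
  have hpq' : p ≤ q := by exact_mod_cast hpq
  have hq2 : q ^ 2 ≠ 0 := pow_ne_zero _ hq0
  rw [← ENNReal.coe_sub, ← ENNReal.coe_pow, ← ENNReal.coe_inv hq2, ← ENNReal.coe_mul,
    ← ENNReal.coe_inv hp0, ← ENNReal.coe_inv hq0, ← ENNReal.coe_sub, ENNReal.coe_le_coe]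
  have hpR : (0:ℝ) < p := NNReal.coe_pos.mpr (pos_iff_ne_zero.mpr hp0)
  have hqR : (0:ℝ) < q := NNReal.coe_pos.mpr (pos_iff_ne_zero.mpr hq0)
  have hpqR : (p:ℝ) ≤ q := hpq'
  have hinv : q⁻¹ ≤ p⁻¹ := by
    rw [← NNReal.coe_le_coe, NNReal.coe_inv, NNReal.coe_inv]
    gcongr
  rw [← NNReal.coe_le_coe, NNReal.coe_mul, NNReal.coe_inv, NNReal.coe_pow,
    NNReal.coe_sub hpq', NNReal.coe_sub hinv, NNReal.coe_inv, NNReal.coe_inv]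
  have key : (p:ℝ)⁻¹ - (q:ℝ)⁻¹ = ((q:ℝ) - p) / (p * q) := by
    field_simp
  rw [key, inv_mul_eq_div]
  have h1 : (0:ℝ) ≤ (q:ℝ) - p := by linarith
  have h2 : (0:ℝ) < (p:ℝ) * q := by positivity
  have h3 : (p:ℝ) * q ≤ (q:ℝ) ^ 2 := by nlinarith
  gcongr

theorem sphericalization_measure_finite {X : Type*} [MetricSpace X] [MeasurableSpace X]
    (μ : Measure X)
    (hunb : ¬ Bornology.IsBounded (Set.univ : Set X))
    (hball : ∀ (x : X) (r : ℝ), 0 < r → 0 < μ (Metric.ball x r) ∧ μ (Metric.ball x r) < ⊤)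
    (a : X) :
    (μ.withDensity fun x => (μ (Metric.ball a (1 + dist x a)) ^ 2)⁻¹) Set.univ ≤
      2 / μ (Metric.ball a 1) := by
  clear hunb
  set f : X → ℝ≥0∞ := fun x => (μ (Metric.ball a (1 + dist x a)) ^ 2)⁻¹ with hf
  set b : ℕ → ℝ≥0∞ := fun j => μ (ball a (j : ℝ)) with hb
  -- basic facts about b
  have hb0 : b 0 = 0 := by simp [hb]
  have hbne : ∀ j : ℕ, 0 < j → b j ≠ 0 := fun j hj =>
    (hball a j (by exact_mod_cast hj)).1.ne'
  have hbfin : ∀ j : ℕ, b j ≠ ⊤ := by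
    intro j
    rcases Nat.eq_zero_or_pos j with h | h
    · simp [h, hb0]
    · exact (hball a j (by exact_mod_cast h)).2.ne
  have hbmono : Monotone b := fun i j hij =>
    measure_mono (ball_subset_ball (by exact_mod_cast hij))
  have hb1 : b 1 = μ (Metric.ball a 1) := by norm_num [hb]
  -- the annular measures
  haveI hIF : ∀ j : ℕ, IsFiniteMeasure (μ.restrict (ball a (j : ℝ))) := fun j =>
    ⟨by rw [Measure.restrict_apply_univ]; exact (hbfin j).lt_top⟩
  set ν : ℕ → Measure X := fun j =>
    μ.restrict (ball a ((j + 1 : ℕ) : ℝ)) - μ.restrict (ball a (j : ℝ)) with hν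
  have hres : ∀ j : ℕ, μ.restrict (ball a (j : ℝ)) ≤ μ.restrict (ball a ((j + 1 : ℕ) : ℝ)) :=
    fun j => Measure.restrict_mono (ball_subset_ball (by push_cast; linarith)) le_rfl
  have hνapp : ∀ (j : ℕ) (s : Set X), MeasurableSet s →
      ν j s = μ (s ∩ ball a ((j + 1 : ℕ) : ℝ)) - μ (s ∩ ball a (j : ℝ)) := by
    intro j s hs
    haveI := hIF j
    rw [hν, Measure.sub_apply hs (hres j), Measure.restrict_apply hs, Measure.restrict_apply hs]
  -- μ ≤ ∑ ν j
  have hμle : μ ≤ Measure.sum ν := by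
    refine Measure.le_iff.mpr fun s hs => ?_
    rw [Measure.sum_apply _ hs]
    have hcov : s = ⋃ N : ℕ, s ∩ ball a (N : ℝ) := by
      ext x
      simp only [mem_iUnion, mem_inter_iff]
      constructor
      · intro hx
        exact ⟨⌊dist x a⌋₊ + 1, hx, by
          rw [mem_ball, dist_comm]
          push_cast
          exact lt_of_lt_of_le (Nat.lt_floor_add_one _) (by norm_num)⟩
      · rintro ⟨N, hx, -⟩; exact hx
    have hmono : Monotone fun N : ℕ => s ∩ ball a (N : ℝ) := fun i j hij =>
      inter_subset_inter le_rfl (ball_subset_ball (by exact_mod_cast hij))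
    have htele : ∀ N : ℕ, ∑ j ∈ Finset.range N, ν j s = μ (s ∩ ball a (N : ℝ)) := by
      intro N
      induction N with
      | zero => simp [hb0 ▸ measure_mono_null inter_subset_right (by simp : μ (ball a ((0:ℕ):ℝ)) = 0)]
      | succ N ih =>
        rw [Finset.sum_range_succ, ih, hνapp N s hs]
        exact add_tsub_cancel_of_le (measure_mono (inter_subset_inter le_rfl
          (ball_subset_ball (by push_cast; linarith))))
    calc μ s = μ (⋃ N : ℕ, s ∩ ball a (N : ℝ)) := by rw [← hcov]
      _ = ⨆ N : ℕ, μ (s ∩ ball a (N : ℝ)) := hmono.measure_iUnion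
      _ = ⨆ N : ℕ, ∑ j ∈ Finset.range N, ν j s := by
          exact iSup_congr fun N => (htele N).symm
      _ ≤ ∑' j, ν j s := iSup_le fun N => ENNReal.sum_le_tsum _
  -- ν j vanishes on ball a j
  have hνnull : ∀ j : ℕ, ν j (ball a (j : ℝ)) = 0 := by
    intro j
    apply le_antisymm _ zero_le
    calc ν j (ball a (j : ℝ)) ≤ ν j (toMeasurable μ (ball a (j : ℝ))) :=
          measure_mono (subset_toMeasurable _ _)
      _ = μ (toMeasurable μ (ball a (j : ℝ)) ∩ ball a ((j + 1 : ℕ) : ℝ))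
          - μ (toMeasurable μ (ball a (j : ℝ)) ∩ ball a (j : ℝ)) :=
          hνapp j _ (measurableSet_toMeasurable _ _)
      _ ≤ μ (toMeasurable μ (ball a (j : ℝ))) - μ (ball a (j : ℝ)) := by
          rw [inter_eq_self_of_subset_right (subset_toMeasurable _ _)]
          exact tsub_le_tsub (measure_mono inter_subset_left) le_rfl
      _ = 0 := by rw [measure_toMeasurable, tsub_self]
  -- integral bound against ν j
  have hint : ∀ j : ℕ, ∫⁻ x, f x ∂(ν j) ≤ (b (j + 1) ^ 2)⁻¹ * (b (j + 1) - b j) := by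
    intro j
    have hae : ∀ᵐ x ∂(ν j), f x ≤ (b (j + 1) ^ 2)⁻¹ := by
      rw [ae_iff]
      apply measure_mono_null _ (hνnull j)
      intro x hx
      simp only [mem_setOf_eq, not_le] at hx
      rw [mem_ball, dist_comm]
      by_contra hcon
      push_neg at hcon
      have hsub : ball a ((j + 1 : ℕ) : ℝ) ⊆ ball a (1 + dist x a) :=
        ball_subset_ball (by push_cast; rw [dist_comm]; linarith)
      have hle : b (j + 1) ≤ μ (ball a (1 + dist x a)) := measure_mono hsub
      have : f x ≤ (b (j + 1) ^ 2)⁻¹ := ENNReal.inv_le_inv' (by gcongr)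
      exact absurd this (not_le.mpr hx)
    have hνuniv : ν j univ = b (j + 1) - b j := by
      rw [hνapp j univ MeasurableSet.univ, univ_inter, univ_inter]
    calc ∫⁻ x, f x ∂(ν j) ≤ ∫⁻ _, (b (j + 1) ^ 2)⁻¹ ∂(ν j) := lintegral_mono_ae hae
      _ = (b (j + 1) ^ 2)⁻¹ * (ν j univ) := lintegral_const _
      _ = (b (j + 1) ^ 2)⁻¹ * (b (j + 1) - b j) := by rw [hνuniv]
  -- the comparison sequence
  set u : ℕ → ℝ≥0∞ := fun j => if j = 0 then (b 1)⁻¹ else (b j)⁻¹ - (b (j + 1))⁻¹ with hu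
  have htu : ∀ j : ℕ, (b (j + 1) ^ 2)⁻¹ * (b (j + 1) - b j) ≤ u j := by
    intro j
    cases j with
    | zero =>
      simp only [hu, if_pos rfl, hb0, tsub_zero, zero_add]
      rw [sq, ENNReal.mul_inv (Or.inl (hbne 1 one_pos)) (Or.inl (hbfin 1)),
        mul_assoc, ENNReal.inv_mul_cancel (hbne 1 one_pos) (hbfin 1), mul_one]
    | succ k =>
      simp only [hu, if_neg (Nat.succ_ne_zero k)]
      exact key_ineq (hbne (k + 1) (by omega)) (hbfin (k + 2)) (hbmono (by omega))
  have husum : ∑' j, u j ≤ 2 * (b 1)⁻¹ := by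
    rw [ENNReal.tsum_eq_iSup_sum]
    apply iSup_le
    intro s
    have hclaim : ∀ N : ℕ, ∑ j ∈ Finset.range (N + 1), u j + (b (N + 1))⁻¹ ≤ 2 * (b 1)⁻¹ := by
      intro N
      induction N with
      | zero => simp [hu, two_mul]
      | succ N ih =>
        rw [Finset.sum_range_succ, add_assoc]
        have : u (N + 1) + (b (N + 2))⁻¹ ≤ (b (N + 1))⁻¹ := by
          rw [hu]
          simp only [if_neg (Nat.succ_ne_zero N)]
          rw [tsub_add_cancel_of_le (ENNReal.inv_le_inv' (hbmono (by omega)))]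
        calc ∑ j ∈ Finset.range (N + 1), u j + (u (N + 1) + (b (N + 2))⁻¹)
            ≤ ∑ j ∈ Finset.range (N + 1), u j + (b (N + 1))⁻¹ := by gcongr
          _ ≤ 2 * (b 1)⁻¹ := ih
    have hsub : s ⊆ Finset.range (s.sup id + 1) := fun i hi =>
      Finset.mem_range.mpr (Nat.lt_succ_of_le (Finset.le_sup (f := id) hi))
    calc ∑ j ∈ s, u j ≤ ∑ j ∈ Finset.range (s.sup id + 1), u j :=
          Finset.sum_le_sum_of_subset hsub
      _ ≤ 2 * (b 1)⁻¹ := le_trans le_self_add (hclaim _)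
  -- put everything together
  calc (μ.withDensity f) univ = ∫⁻ x, f x ∂μ := by
        rw [withDensity_apply _ MeasurableSet.univ, Measure.restrict_univ]
    _ ≤ ∫⁻ x, f x ∂(Measure.sum ν) := lintegral_mono' hμle le_rfl
    _ = ∑' j, ∫⁻ x, f x ∂(ν j) := lintegral_sum_measure _ _
    _ ≤ ∑' j, (b (j + 1) ^ 2)⁻¹ * (b (j + 1) - b j) := ENNReal.tsum_le_tsum hint
    _ ≤ ∑' j, u j := ENNReal.tsum_le_tsum htu
    _ ≤ 2 * (b 1)⁻¹ := husum
    _ = 2 / μ (Metric.ball a 1) := by rw [hb1, div_eq_mul_inv]
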